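/- The limit as t → 0⁺ of H(t) = (n-1)coth²(t) - (1/sinh²(t))·(2 + (n-3)·t·coth(t)) equals 2n/3, and the limit as t → ∞ equals n-1. -/

import Mathlib

open Real Set Filter

lemma aux_sinh_div_self : Tendsto (fun t : ℝ => Real.sinh t / t) (nhdsWithin 0 (Set.Ioi 0)) (nhds 1) := by
  have h := (Real.hasDerivAt_sinh 0)
  rw [hasDerivAt_iff_tendsto_slope] at h
  simp only [Real.cosh_zero] at h
  have := h.mono_left (nhdsWithin_mono 0 (fun x hx => ne_of_gt hx : Set.Ioi (0:ℝ) ⊆ {0}ᶜ))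
  refine this.congr (fun x => ?_)
  simp [slope_def_field, div_eq_div_iff]

lemma aux_self_div_sinh : Tendsto (fun t : ℝ => t / Real.sinh t) (nhdsWithin 0 (Set.Ioi 0)) (nhds 1) := by
  have := (aux_sinh_div_self.inv₀ one_ne_zero)
  simpa [inv_div] using this

lemma aux_lhopital : Tendsto (fun t : ℝ => (Real.sinh t - t * Real.cosh t) / t ^ 3)
    (nhdsWithin 0 (Set.Ioi 0)) (nhds (-(1/3))) := by
  apply HasDerivAt.lhopital_zero_nhdsGT (f' := fun t => -(t * Real.sinh t))
    (g' := fun t => 3 * t ^ 2)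
  · filter_upwards with t
    have h1 := (Real.hasDerivAt_sinh t).sub ((hasDerivAt_id t).mul (Real.hasDerivAt_cosh t))
    refine h1.congr_deriv ?_
    simp only [id_eq]
    ring
  · filter_upwards with t
    have := hasDerivAt_pow 3 t
    norm_num at this
    exact this
  · filter_upwards [self_mem_nhdsWithin] with t (ht : 0 < t)
    positivity
  · have : Tendsto (fun t : ℝ => Real.sinh t - t * Real.cosh t) (nhds 0) (nhds 0) := by
      have := (Real.continuous_sinh.sub (continuous_id.mul Real.continuous_cosh)).tendsto 0
      simp at this
      exact this
    exact this.mono_left nhdsWithin_le_nhds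
  · have : Tendsto (fun t : ℝ => t ^ 3) (nhds 0) (nhds 0) := by
      simpa using (continuous_pow 3).tendsto (0:ℝ)
    exact this.mono_left nhdsWithin_le_nhds
  · have h : Tendsto (fun t : ℝ => -(Real.sinh t / t) / 3) (nhdsWithin 0 (Set.Ioi 0))
        (nhds (-(1/3))) := by
      have := (aux_sinh_div_self.neg).div_const 3
      convert this using 2
      norm_num
    refine h.congr' ?_
    filter_upwards [self_mem_nhdsWithin] with t (ht : 0 < t)
    have ht0 : t ≠ 0 := ne_of_gt ht
    field_simp

lemma aux_exp_neg_two : Tendsto (fun t : ℝ => Real.exp (-(2*t))) atTop (nhds 0) := by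
  have h2 : Tendsto (fun t : ℝ => 2 * t) atTop atTop :=
    Tendsto.const_mul_atTop two_pos tendsto_id
  exact Real.tendsto_exp_neg_atTop_nhds_zero.comp h2

lemma aux_mul_exp_neg_two : Tendsto (fun t : ℝ => t * Real.exp (-(2*t))) atTop (nhds 0) := by
  have h2 : Tendsto (fun t : ℝ => 2 * t) atTop atTop :=
    Tendsto.const_mul_atTop two_pos tendsto_id
  have h := (Real.tendsto_pow_mul_exp_neg_atTop_nhds_zero 1).comp h2
  have h' := h.div_const 2
  rw [zero_div] at h'
  refine h'.congr (fun t => ?_)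
  simp only [Function.comp_apply, pow_one]
  ring

lemma aux_sinh_eq (t : ℝ) : Real.sinh t = Real.exp t * (1 - Real.exp (-(2*t))) / 2 := by
  have key : Real.exp t * Real.exp (-(2*t)) = Real.exp (-t) := by
    rw [← Real.exp_add]; congr 1; ring
  rw [Real.sinh_eq, ← key]; ring

lemma aux_cosh_eq (t : ℝ) : Real.cosh t = Real.exp t * (1 + Real.exp (-(2*t))) / 2 := by
  have key : Real.exp t * Real.exp (-(2*t)) = Real.exp (-t) := by
    rw [← Real.exp_add]; congr 1; ring
  rw [Real.cosh_eq, ← key]; ring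

lemma aux_coth_atTop : Tendsto (fun t : ℝ => Real.cosh t / Real.sinh t) atTop (nhds 1) := by
  have h : Tendsto (fun t : ℝ => (1 + Real.exp (-(2*t))) / (1 - Real.exp (-(2*t)))) atTop
      (nhds 1) := by
    have h0 : Tendsto (fun t : ℝ => (1 + Real.exp (-(2*t))) / (1 - Real.exp (-(2*t)))) atTop
        (nhds ((1 + 0) / (1 - 0))) :=
      Tendsto.div (tendsto_const_nhds.add aux_exp_neg_two)
        (tendsto_const_nhds.sub aux_exp_neg_two) (by norm_num)
    norm_num at h0
    exact h0
  refine h.congr' ?_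
  filter_upwards [eventually_gt_atTop 0] with t ht
  have hu0 : Real.exp t ≠ 0 := (Real.exp_pos t).ne'
  have hx1 : Real.exp (-(2*t)) < 1 := Real.exp_lt_one_iff.mpr (by linarith)
  have hx1' : 1 - Real.exp (-(2*t)) ≠ 0 := by linarith
  rw [aux_cosh_eq, aux_sinh_eq]
  field_simp

lemma aux_inv_sinh_sq (t : ℝ) (ht : 0 < t) :
    1 / Real.sinh t ^ 2 = 4 * Real.exp (-(2*t)) / (1 - Real.exp (-(2*t))) ^ 2 := by
  have hu0 : Real.exp t ≠ 0 := (Real.exp_pos t).ne'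
  have hx1 : Real.exp (-(2*t)) < 1 := Real.exp_lt_one_iff.mpr (by linarith)
  have hx1' : 1 - Real.exp (-(2*t)) ≠ 0 := by linarith
  have hx2 : Real.exp t ^ 2 * Real.exp (-(2*t)) = 1 := by
    rw [← Real.exp_nat_mul, ← Real.exp_add]
    norm_num
  rw [aux_sinh_eq]
  field_simp
  linear_combination (-(4:ℝ) * (1 - Real.exp (-(2*t))) ^ 2 - 8 * Real.exp (-(2*t)) + 4 * Real.exp (-(2*t)) ^ 2) * hx2

lemma aux_inv_sinh_sq_atTop : Tendsto (fun t : ℝ => 1 / Real.sinh t ^ 2) atTop (nhds 0) := by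
  have h : Tendsto (fun t : ℝ => 4 * Real.exp (-(2*t)) / (1 - Real.exp (-(2*t))) ^ 2) atTop
      (nhds 0) := by
    have h0 : Tendsto (fun t : ℝ => 4 * Real.exp (-(2*t)) / (1 - Real.exp (-(2*t))) ^ 2) atTop
        (nhds (4 * 0 / (1 - 0) ^ 2)) :=
      Tendsto.div (tendsto_const_nhds.mul aux_exp_neg_two)
        ((tendsto_const_nhds.sub aux_exp_neg_two).pow 2) (by norm_num)
    norm_num at h0
    exact h0
  refine h.congr' ?_
  filter_upwards [eventually_gt_atTop 0] with t ht
  exact (aux_inv_sinh_sq t ht).symm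

lemma aux_mul_inv_sinh_sq_atTop :
    Tendsto (fun t : ℝ => t * (1 / Real.sinh t ^ 2)) atTop (nhds 0) := by
  have h : Tendsto (fun t : ℝ => 4 * (t * Real.exp (-(2*t))) / (1 - Real.exp (-(2*t))) ^ 2) atTop
      (nhds 0) := by
    have h0 : Tendsto (fun t : ℝ => 4 * (t * Real.exp (-(2*t))) / (1 - Real.exp (-(2*t))) ^ 2)
        atTop (nhds (4 * 0 / (1 - 0) ^ 2)) :=
      Tendsto.div (tendsto_const_nhds.mul aux_mul_exp_neg_two)
        ((tendsto_const_nhds.sub aux_exp_neg_two).pow 2) (by norm_num)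
    norm_num at h0
    exact h0
  refine h.congr' ?_
  filter_upwards [eventually_gt_atTop 0] with t ht
  rw [aux_inv_sinh_sq t ht]
  ring

/-- Limits of `H(t) = (n-1)coth²t - (2 + (n-3)t coth t)/sinh²t`:
`H(t) → 2n/3` as `t → 0⁺` and `H(t) → n-1` as `t → ∞`. -/
theorem hyperbolic_H_limits (n : ℕ) (hn : 2 ≤ n)
    (H : ℝ → ℝ)
    (hH : ∀ t : ℝ, H t = ((n : ℝ) - 1) * (Real.cosh t / Real.sinh t) ^ 2
      - (1 / Real.sinh t ^ 2) * (2 + ((n : ℝ) - 3) * t * (Real.cosh t / Real.sinh t))) :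
    Filter.Tendsto H (nhdsWithin 0 (Set.Ioi (0 : ℝ))) (nhds (2 * (n : ℝ) / 3)) ∧
    Filter.Tendsto H Filter.atTop (nhds ((n : ℝ) - 1)) := by
  constructor
  · -- limit at 0⁺
    have T : Tendsto (fun t : ℝ => ((n : ℝ) - 1) + ((n:ℝ) - 3) *
        ((Real.sinh t - t * Real.cosh t) / t ^ 3 * (t / Real.sinh t) ^ 3))
        (nhdsWithin 0 (Set.Ioi 0))
        (nhds (((n : ℝ) - 1) + ((n:ℝ) - 3) * (-(1/3) * 1 ^ 3))) :=
      tendsto_const_nhds.add (tendsto_const_nhds.mul (aux_lhopital.mul (aux_self_div_sinh.pow 3)))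
    have hval : ((n : ℝ) - 1) + ((n:ℝ) - 3) * (-(1/3) * 1 ^ 3) = 2 * (n : ℝ) / 3 := by ring
    rw [hval] at T
    refine T.congr' ?_
    filter_upwards [self_mem_nhdsWithin] with t (ht : 0 < t)
    have hs : Real.sinh t ≠ 0 := (Real.sinh_pos_iff.mpr ht).ne'
    have ht0 : t ≠ 0 := ne_of_gt ht
    have hc : Real.cosh t ^ 2 = Real.sinh t ^ 2 + 1 := Real.cosh_sq t
    rw [hH t]
    field_simp
    linear_combination ((1 : ℝ) - (n : ℝ)) * Real.sinh t * hc
  · -- limit at ∞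
    have T : Tendsto (fun t : ℝ => ((n : ℝ) - 1) * (Real.cosh t / Real.sinh t) ^ 2
        - (2 * (1 / Real.sinh t ^ 2)
          + ((n:ℝ) - 3) * (t * (1 / Real.sinh t ^ 2)) * (Real.cosh t / Real.sinh t))) atTop
        (nhds (((n : ℝ) - 1) * 1 ^ 2 - (2 * 0 + ((n:ℝ) - 3) * 0 * 1))) :=
      (tendsto_const_nhds.mul (aux_coth_atTop.pow 2)).sub
        ((tendsto_const_nhds.mul aux_inv_sinh_sq_atTop).add
          ((tendsto_const_nhds.mul aux_mul_inv_sinh_sq_atTop).mul aux_coth_atTop))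
    have hval : ((n : ℝ) - 1) * 1 ^ 2 - (2 * 0 + ((n:ℝ) - 3) * 0 * 1) = (n : ℝ) - 1 := by ring
    rw [hval] at T
    refine T.congr (fun t => ?_)
    rw [hH t]
    ring
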